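/- Under the setting of the previous recursion (Δ_{H+1}^k = 0, Δ_h^k = ∑_{t=1}^k α_k^t Δ_{h+1}^t + β_k with α_k = (H+1)/(H+k) and β_k non-increasing and nonnegative), for every h and k: (1/k)∑_{t=1}^k Δ_h^t ≤ H(e-1) · (1/k)∑_{t=1}^k β_t. In particular Δ_h^k ≤ (2H/k) ∑_{t=1}^k β_t. -/

import Mathlib

open Finset

set_option maxHeartbeats 1000000 in

theorem Delta_average_bound
    (H : ℕ) (hH : 1 ≤ H)
    (α : ℕ → ℝ) (hα : ∀ k, α k = (H + 1 : ℝ) / (H + k))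
    (αw : ℕ → ℕ → ℝ)
    (hαw : ∀ k t, αw k t = α t * ∏ i ∈ Finset.Icc (t + 1) k, (1 - α i))
    (β : ℕ → ℝ) (hβ0 : ∀ k, 0 ≤ β k) (hβmono : ∀ k, β (k + 1) ≤ β k)
    (Δ : ℕ → ℕ → ℝ)
    (hΔtop : ∀ k, Δ (H + 1) k = 0)
    (hΔ : ∀ h ∈ Finset.Icc 1 H, ∀ k ≥ 1,
      Δ h k = ∑ t ∈ Finset.Icc 1 k, αw k t * Δ (h + 1) t + β k) :
    ∀ h ∈ Finset.Icc 1 (H + 1), ∀ k ≥ 1,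
      ((1 : ℝ) / k) * ∑ t ∈ Finset.Icc 1 k, Δ h t ≤
        (H : ℝ) * (Real.exp 1 - 1) * (((1 : ℝ) / k) * ∑ t ∈ Finset.Icc 1 k, β t) ∧
      Δ h k ≤ (2 * (H : ℝ) / k) * ∑ t ∈ Finset.Icc 1 k, β t := by
  have hHpos : (0:ℝ) < H := by exact_mod_cast hH
  have hα0 : ∀ i, 0 ≤ α i := by
    intro i; rw [hα]; positivity
  have hα1 : ∀ i, 1 ≤ i → α i ≤ 1 := by
    intro i hi
    rw [hα, div_le_one (by positivity)]
    have : (1:ℝ) ≤ i := by exact_mod_cast hi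
    linarith
  have hαw0 : ∀ k t, 0 ≤ αw k t := by
    intro k t
    rw [hαw]
    apply mul_nonneg (hα0 t)
    apply Finset.prod_nonneg
    intro i hi
    have hi1 : 1 ≤ i := by simp [mem_Icc] at hi; omega
    linarith [hα1 i hi1]
  have hαws : ∀ t k, t ≤ k → αw (k+1) t = αw k t * (1 - α (k+1)) := by
    intro t k htk
    rw [hαw, hαw, Finset.prod_Icc_succ_top (by omega), mul_assoc]
  have hαself : ∀ k, αw k k = α k := by
    intro k
    rw [hαw]
    have : Finset.Icc (k+1) k = ∅ := by
      apply Finset.Icc_eq_empty; omega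
    rw [this, Finset.prod_empty, mul_one]
  -- the weights sum to one over t
  have hsum1 : ∀ k, 1 ≤ k → ∑ t ∈ Icc 1 k, αw k t = 1 := by
    intro k hk
    induction k, hk using Nat.le_induction with
    | base =>
      rw [Finset.Icc_self, Finset.sum_singleton, hαself, hα]
      have : (H:ℝ) + 1 ≠ 0 := by positivity
      push_cast
      field_simp
    | succ k hk ih =>
      rw [Finset.sum_Icc_succ_top (by omega)]
      have h1 : ∀ t ∈ Icc 1 k, αw (k+1) t = αw k t * (1 - α (k+1)) := by
        intro t ht
        exact hαws t k (by simp [mem_Icc] at ht; omega)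
      rw [Finset.sum_congr rfl h1, ← Finset.sum_mul, ih, hαself]
      ring
  -- chaining a step-monotonicity statement
  have chain : ∀ (f : ℕ → ℝ), (∀ j, 1 ≤ j → f (j+1) ≤ f j) →
      ∀ t k, 1 ≤ t → t ≤ k → f k ≤ f t := by
    intro f hf t k ht htk
    induction k, htk using Nat.le_induction with
    | base => exact le_rfl
    | succ k hk ih => exact le_trans (hf k (le_trans ht hk)) ih
  -- nonnegativity of Δ
  have hnn : ∀ d, d ≤ H → ∀ k, 1 ≤ k → 0 ≤ Δ (H+1-d) k := by
    intro d
    induction d with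
    | zero => intro _ k hk; simp [hΔtop]
    | succ d ih =>
      intro hd k hk
      have hmem : H+1-(d+1) ∈ Icc 1 H := by simp [mem_Icc]; omega
      have hstep : H+1-(d+1)+1 = H+1-d := by omega
      rw [hΔ _ hmem k hk, hstep]
      apply add_nonneg _ (hβ0 k)
      apply Finset.sum_nonneg
      intro t ht
      have ht1 : 1 ≤ t := by simp [mem_Icc] at ht; omega
      exact mul_nonneg (hαw0 k t) (ih (by omega) t ht1)
  -- monotonicity of Δ in k
  have hmono : ∀ d, d ≤ H → ∀ k, 1 ≤ k → Δ (H+1-d) (k+1) ≤ Δ (H+1-d) k := by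
    intro d
    induction d with
    | zero => intro _ k hk; simp [hΔtop]
    | succ d ih =>
      intro hd k hk
      have hdH : d ≤ H := by omega
      have hmem : H+1-(d+1) ∈ Icc 1 H := by simp [mem_Icc]; omega
      have hstep : H+1-(d+1)+1 = H+1-d := by omega
      have e1 : Δ (H+1-(d+1)) k = ∑ t ∈ Icc 1 k, αw k t * Δ (H+1-d) t + β k := by
        rw [hΔ _ hmem k hk, hstep]
      have e2 : Δ (H+1-(d+1)) (k+1) = α (k+1) * Δ (H+1-d) (k+1)
          + (1 - α (k+1)) * (∑ t ∈ Icc 1 k, αw k t * Δ (H+1-d) t) + β (k+1) := by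
        rw [hΔ _ hmem (k+1) (by omega), hstep,
            Finset.sum_Icc_succ_top (show 1 ≤ k+1 by omega)]
        have h1 : ∀ t ∈ Icc 1 k, αw (k+1) t * Δ (H+1-d) t
            = (αw k t * Δ (H+1-d) t) * (1 - α (k+1)) := by
          intro t ht
          rw [hαws t k (by simp [mem_Icc] at ht; omega)]; ring
        rw [Finset.sum_congr rfl h1, ← Finset.sum_mul, hαself]
        ring
      have hlow : Δ (H+1-d) (k+1) + β k ≤ Δ (H+1-(d+1)) k := by
        rw [e1]
        have hone : Δ (H+1-d) (k+1) = ∑ t ∈ Icc 1 k, αw k t * Δ (H+1-d) (k+1) := by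
          rw [← Finset.sum_mul, hsum1 k hk, one_mul]
        rw [hone]
        apply add_le_add_left
        apply Finset.sum_le_sum
        intro t ht
        have ht1 : 1 ≤ t ∧ t ≤ k := by simpa [mem_Icc] using ht
        exact mul_le_mul_of_nonneg_left
          (chain (Δ (H+1-d)) (fun j hj => ih hdH j hj) t (k+1) ht1.1 (by omega))
          (hαw0 k t)
      rw [e2]
      have hb := hβmono k
      have ha0 := hα0 (k+1)
      nlinarith [hlow, e1, mul_nonneg ha0 (by linarith [hlow] :
        (0:ℝ) ≤ Δ (H+1-(d+1)) k - Δ (H+1-d) (k+1) - β k)]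
  -- closed form for the weights
  have hC : ∀ t, 1 ≤ t → ∀ K, t ≤ K →
      αw K t = ((H:ℝ)+1)/K * ∏ j ∈ Icc t K, ((j:ℝ)/(H+j)) := by
    intro t ht K hK
    induction K, hK using Nat.le_induction with
    | base =>
      rw [hαself, hα, Finset.Icc_self, Finset.prod_singleton]
      have ht0 : (0:ℝ) < t := by exact_mod_cast ht
      field_simp
    | succ K hK ih =>
      have hK0 : (0:ℝ) < K := by
        have : 1 ≤ K := le_trans ht hK
        exact_mod_cast this
      rw [hαws t K hK, ih, Finset.prod_Icc_succ_top (by omega), hα]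
      push_cast
      have hd1 : (H:ℝ) + (K+1) ≠ 0 := by positivity
      field_simp
      ring
  -- sum of weights over k: exact formula
  have hA : ∀ t, 1 ≤ t → ∀ K, t ≤ K →
      ∑ j ∈ Icc t K, αw j t
        = (1+1/(H:ℝ)) * (1 - ∏ j ∈ Icc t K, ((j:ℝ)/(H+j))) := by
    intro t ht K hK
    induction K, hK using Nat.le_induction with
    | base =>
      rw [Finset.Icc_self, Finset.sum_singleton, Finset.prod_singleton,
        hC t ht t le_rfl, Finset.Icc_self, Finset.prod_singleton]
      have ht0 : (0:ℝ) < t := by exact_mod_cast ht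
      have hHt : (0:ℝ) < (H:ℝ) + t := by positivity
      field_simp
      ring
    | succ K hK ih =>
      have hK0 : (0:ℝ) < K := by
        have : 1 ≤ K := le_trans ht hK
        exact_mod_cast this
      rw [Finset.sum_Icc_succ_top (by omega), ih, hC t ht (K+1) (by omega),
          Finset.prod_Icc_succ_top (show t ≤ K + 1 by omega)]
      have hd1 : (H:ℝ) + ((K:ℝ)+1) ≠ 0 := by positivity
      have hd2 : ((K:ℝ)+1) ≠ 0 := by positivity
      have hd3 : (H:ℝ) ≠ 0 := by positivity
      push_cast
      field_simp
      ring
  have hwsum : ∀ t, 1 ≤ t → ∀ K, t ≤ K →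
      ∑ j ∈ Icc t K, αw j t ≤ 1 + 1/(H:ℝ) := by
    intro t ht K hK
    rw [hA t ht K hK]
    have hPP : 0 ≤ ∏ j ∈ Icc t K, ((j:ℝ)/(H+j)) :=
      Finset.prod_nonneg (fun j _ => by positivity)
    nlinarith [mul_nonneg (by positivity : (0:ℝ) ≤ 1 + 1/(H:ℝ)) hPP]
  -- bound on partial sums of Δ
  have hS : ∀ d, d ≤ H → ∀ k, 1 ≤ k →
      ∑ t ∈ Icc 1 k, Δ (H+1-d) t
        ≤ (H:ℝ) * ((1+1/(H:ℝ))^d - 1) * ∑ t ∈ Icc 1 k, β t := by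
    intro d
    induction d with
    | zero => intro _ k hk; simp [hΔtop]
    | succ d ih =>
      intro hd k hk
      have hdH : d ≤ H := by omega
      have hmem : H+1-(d+1) ∈ Icc 1 H := by simp [mem_Icc]; omega
      have hstep : H+1-(d+1)+1 = H+1-d := by omega
      have e1 : ∀ j ∈ Icc 1 k, Δ (H+1-(d+1)) j
          = ∑ t ∈ Icc 1 j, αw j t * Δ (H+1-d) t + β j := by
        intro j hj
        rw [hΔ _ hmem j (by simp [mem_Icc] at hj; omega), hstep]
      rw [Finset.sum_congr rfl e1, Finset.sum_add_distrib]
      have swap : ∑ j ∈ Icc 1 k, ∑ t ∈ Icc 1 j, αw j t * Δ (H+1-d) t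
          = ∑ t ∈ Icc 1 k, ∑ j ∈ Icc t k, αw j t * Δ (H+1-d) t := by
        apply Finset.sum_comm'
        intro j t
        simp only [mem_Icc]
        omega
      rw [swap]
      have hB0 : 0 ≤ ∑ t ∈ Icc 1 k, β t := Finset.sum_nonneg fun t _ => hβ0 t
      have step1 : ∑ t ∈ Icc 1 k, ∑ j ∈ Icc t k, αw j t * Δ (H+1-d) t
          ≤ (1+1/(H:ℝ)) * ∑ t ∈ Icc 1 k, Δ (H+1-d) t := by
        rw [Finset.mul_sum]
        apply Finset.sum_le_sum
        intro t ht
        have ht1 : 1 ≤ t ∧ t ≤ k := by simpa [mem_Icc] using ht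
        rw [← Finset.sum_mul]
        exact mul_le_mul_of_nonneg_right (hwsum t ht1.1 k ht1.2)
          (hnn d hdH t ht1.1)
      have step2 : (1+1/(H:ℝ)) * ∑ t ∈ Icc 1 k, Δ (H+1-d) t
          ≤ (1+1/(H:ℝ)) * ((H:ℝ) * ((1+1/(H:ℝ))^d - 1) * ∑ t ∈ Icc 1 k, β t) :=
        mul_le_mul_of_nonneg_left (ih hdH k hk) (by positivity)
      have key : (1+1/(H:ℝ)) * ((H:ℝ) * ((1+1/(H:ℝ))^d - 1)) + 1
          = (H:ℝ) * ((1+1/(H:ℝ))^(d+1) - 1) := by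
        have hH0 : (H:ℝ) ≠ 0 := by positivity
        have hinv : (H:ℝ) * (1/H) = 1 := by field_simp
        linear_combination (-1:ℝ) * hinv
      nlinarith [step1, step2, hB0]
  -- final assembly
  intro h hh k hk
  have hh' : 1 ≤ h ∧ h ≤ H+1 := by simpa [mem_Icc] using hh
  have hdH : H+1-h ≤ H := by omega
  have hhd : H+1-(H+1-h) = h := by omega
  have hB0 : 0 ≤ ∑ t ∈ Icc 1 k, β t := Finset.sum_nonneg fun t _ => hβ0 t
  have hk0 : (0:ℝ) < k := by exact_mod_cast hk
  have hpow : (1+1/(H:ℝ))^(H+1-h) ≤ Real.exp 1 := by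
    have h1 : (1:ℝ)+1/H ≤ Real.exp (1/H) := by
      have := Real.add_one_le_exp (1/(H:ℝ)); linarith
    calc (1+1/(H:ℝ))^(H+1-h) ≤ (Real.exp (1/H))^(H+1-h) :=
          pow_le_pow_left₀ (by positivity) h1 _
      _ = Real.exp ((H+1-h : ℕ)/H) := by
          rw [← Real.exp_nat_mul]
          ring_nf
      _ ≤ Real.exp 1 := by
          apply Real.exp_le_exp.2
          rw [div_le_one hHpos]
          exact_mod_cast hdH
  have hS' : ∑ t ∈ Icc 1 k, Δ h t ≤ (H:ℝ)*(Real.exp 1 - 1) * ∑ t ∈ Icc 1 k, β t := by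
    have h0 := hS (H+1-h) hdH k hk
    rw [hhd] at h0
    refine le_trans h0 ?_
    have hcoef : (H:ℝ)*((1+1/(H:ℝ))^(H+1-h) - 1) ≤ (H:ℝ)*(Real.exp 1 - 1) := by
      nlinarith
    nlinarith [mul_le_mul_of_nonneg_right hcoef hB0]
  constructor
  · have := mul_le_mul_of_nonneg_left hS' (by positivity : (0:ℝ) ≤ 1/(k:ℝ))
    calc ((1:ℝ)/k) * ∑ t ∈ Icc 1 k, Δ h t
        ≤ (1/(k:ℝ)) * ((H:ℝ)*(Real.exp 1 - 1) * ∑ t ∈ Icc 1 k, β t) := this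
      _ = (H:ℝ)*(Real.exp 1 - 1) * (((1:ℝ)/k) * ∑ t ∈ Icc 1 k, β t) := by ring
  · have hδmono : ∀ t ∈ Icc 1 k, Δ h k ≤ Δ h t := by
      intro t ht
      have ht1 : 1 ≤ t ∧ t ≤ k := by simpa [mem_Icc] using ht
      have hstep' : ∀ j, 1 ≤ j → Δ h (j+1) ≤ Δ h j := by
        intro j hj
        have := hmono (H+1-h) hdH j hj
        rwa [hhd] at this
      exact chain (Δ h) hstep' t k ht1.1 ht1.2
    have hkΔ : (k:ℝ) * Δ h k ≤ ∑ t ∈ Icc 1 k, Δ h t := by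
      calc (k:ℝ) * Δ h k = ∑ _t ∈ Icc 1 k, Δ h k := by
            rw [Finset.sum_const, Nat.card_Icc, Nat.add_sub_cancel, nsmul_eq_mul]
          _ ≤ _ := Finset.sum_le_sum hδmono
    have he3 : Real.exp 1 ≤ 3 :=
      le_of_lt (lt_of_lt_of_le Real.exp_one_lt_d9 (by norm_num))
    have hfin : (k:ℝ) * Δ h k ≤ 2*(H:ℝ) * ∑ t ∈ Icc 1 k, β t := by
      have h1 : (H:ℝ)*(Real.exp 1 - 1) ≤ 2*(H:ℝ) := by
        have h2 : Real.exp 1 - 1 ≤ 2 := by linarith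
        calc (H:ℝ)*(Real.exp 1 - 1) ≤ (H:ℝ)*2 :=
              mul_le_mul_of_nonneg_left h2 hHpos.le
          _ = 2*(H:ℝ) := by ring
      have h3 := mul_le_mul_of_nonneg_right h1 hB0
      linarith [hkΔ, hS', h3]
    rw [div_mul_eq_mul_div, le_div_iff₀ hk0]
    linarith [hfin]
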